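/- Let Φ(x) = x_1 − Σ_{i=2}^q x_i² and suppose the affine matrix function θ : ℝ^p → ℝ^{p×p} (symmetric values) satisfies ∇Φ(x) θ(x) = 0 for all x on the parabola {x : x_1 = Σ_{i=2}^q x_i²}. Then writing θ in block form with respect to ℝ^q × ℝ^{p-q}, the upper-left q×q block equals c ζ(x) for some c ≥ 0⁺ (c ∈ ℝ with c ζ positive semidefinite on {Φ ≥ 0} forcing c ≥ 0), and the off-diagonal block equals ζ(x)A_1 + η(x)A_2 for some constant matrices A_1, A_2. -/

import Mathlib

open Matrix

/-- `T_{ij}(y) ∈ ℝⁿ` with `i`-th entry `yⱼ`, `j`-th entry `-yᵢ`, zero elsewhere. -/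
noncomputable def Tvec (n : ℕ) (i j : Fin n) (y : Fin n → ℝ) : Fin n → ℝ :=
  fun k => if k = i then y j else if k = j then -(y i) else 0

/-- `η(y)` : first row zero, columns `T_{ij}(y)` for `i < j`. -/
noncomputable def etaMat (n : ℕ) (y : Fin n → ℝ) :
    Matrix (Unit ⊕ Fin n) {ij : Fin n × Fin n // ij.1 < ij.2} ℝ :=
  Matrix.of fun r c => Sum.elim (fun _ => 0) (fun k => Tvec n c.1.1 c.1.2 y k) r

/-- The parabolic boundary matrix `ζ(x) = [[4x₁, 2yᵀ],[2y, Id]]`. -/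
noncomputable def zetaMat (n : ℕ) (x1 : ℝ) (y : Fin n → ℝ) :
    Matrix (Unit ⊕ Fin n) (Unit ⊕ Fin n) ℝ :=
  Matrix.of fun r c =>
    match r, c with
    | Sum.inl _, Sum.inl _ => 4 * x1
    | Sum.inl _, Sum.inr j => 2 * y j
    | Sum.inr j, Sum.inl _ => 2 * y j
    | Sum.inr j, Sum.inr k => if j = k then 1 else 0


section Aux

variable {n m : ℕ}

/-- index of t coordinate -/
abbrev iT (n m : ℕ) : (Unit ⊕ Fin n) ⊕ Fin m := Sum.inl (Sum.inl ())
abbrev iY (n m : ℕ) (j : Fin n) : (Unit ⊕ Fin n) ⊕ Fin m := Sum.inl (Sum.inr j)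
abbrev iZ (n m : ℕ) (k : Fin m) : (Unit ⊕ Fin n) ⊕ Fin m := Sum.inr k

/-- point constructor -/
def pt (t0 : ℝ) (y0 : Fin n → ℝ) (z0 : Fin m → ℝ) : ((Unit ⊕ Fin n) ⊕ Fin m) → ℝ :=
  Sum.elim (Sum.elim (fun _ => t0) y0) z0

lemma entry_eq
    (θ : (((Unit ⊕ Fin n) ⊕ Fin m) → ℝ) →
      Matrix ((Unit ⊕ Fin n) ⊕ Fin m) ((Unit ⊕ Fin n) ⊕ Fin m) ℝ)
    (A0 : Matrix ((Unit ⊕ Fin n) ⊕ Fin m) ((Unit ⊕ Fin n) ⊕ Fin m) ℝ)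
    (A' : ((Unit ⊕ Fin n) ⊕ Fin m) → Matrix ((Unit ⊕ Fin n) ⊕ Fin m) ((Unit ⊕ Fin n) ⊕ Fin m) ℝ) (haff : ∀ x, θ x = A0 + ∑ i, x i • A' i)
    (x : ((Unit ⊕ Fin n) ⊕ Fin m) → ℝ) (a b : (Unit ⊕ Fin n) ⊕ Fin m) :
    θ x a b = A0 a b + (x (iT n m) * A' (iT n m) a b +
      ((∑ j, x (iY n m j) * A' (iY n m j) a b) + ∑ k, x (iZ n m k) * A' (iZ n m k) a b)) := by
  rw [haff]
  simp [Matrix.add_apply, Matrix.sum_apply, Fintype.sum_sum_type]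
  ring


lemma row_eq (M : Matrix ((Unit ⊕ Fin n) ⊕ Fin m) ((Unit ⊕ Fin n) ⊕ Fin m) ℝ)
    (x : ((Unit ⊕ Fin n) ⊕ Fin m) → ℝ)
    (h : Matrix.vecMul
        (Sum.elim (Sum.elim (fun _ => (1 : ℝ)) fun j => -2 * x (Sum.inl (Sum.inr j)))
          fun _ => 0) M = 0)
    (b : (Unit ⊕ Fin n) ⊕ Fin m) :
    M (iT n m) b = 2 * ∑ j, x (iY n m j) * M (iY n m j) b := by
  have h1 := congrFun h b
  simp [Matrix.vecMul, dotProduct, Fintype.sum_sum_type, mul_assoc, neg_mul,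
    ← Finset.sum_neg_distrib, ← Finset.mul_sum] at h1
  rw [Finset.sum_neg_distrib, ← Finset.mul_sum] at h1
  linarith


lemma sumS (j : Fin n) (s : ℝ) (f : Fin n → ℝ) :
    ∑ l, (if l = j then s else 0) * f l = s * f j := by
  simp [ite_mul, Finset.sum_ite_eq']

lemma sumSsq (j : Fin n) (s : ℝ) :
    ∑ l, (if l = j then s else (0:ℝ))^2 = s^2 := by
  have h : ∀ l, ((if l = j then s else 0):ℝ)^2 = if l = j then s^2 else 0 := by
    intro l; split <;> simp
  simp [h, Finset.sum_ite_eq']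

lemma sumD (i j : Fin n) (hij : i ≠ j) (s : ℝ) (f : Fin n → ℝ) :
    ∑ l, ((if l = j then s else 0) + (if l = i then s else 0)) * f l
      = s * f j + s * f i := by
  simp only [add_mul, Finset.sum_add_distrib, sumS]

lemma sumDsq (i j : Fin n) (hij : i ≠ j) (s : ℝ) :
    ∑ l, ((if l = j then s else (0:ℝ)) + (if l = i then s else 0))^2 = 2 * s^2 := by
  have h : ∀ l, ((if l = j then s else (0:ℝ)) + (if l = i then s else 0))^2
      = (if l = j then s^2 else 0) + (if l = i then s^2 else 0) := by
    intro l
    by_cases h1 : l = j <;> by_cases h2 : l = i <;>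
      simp_all <;> first | ring | (exact absurd (h1 ▸ h2) hij.symm)
  simp [h, Finset.sum_add_distrib, Finset.sum_ite_eq']
  ring


lemma eta_sum (y : Fin n → ℝ) (g : Fin n → Fin n → ℝ)
    (hg : ∀ a b, a ≠ b → g a b + g b a = 0) (j : Fin n) :
    ∑ p : {ij : Fin n × Fin n // ij.1 < ij.2}, Tvec n p.1.1 p.1.2 y j * g p.1.2 p.1.1
      = ∑ l, (if l = j then 0 else y l * g l j) := by
  classical
  have hsub : ∑ p : {ij : Fin n × Fin n // ij.1 < ij.2}, Tvec n p.1.1 p.1.2 y j * g p.1.2 p.1.1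
      = ∑ p ∈ Finset.univ.filter (fun p : Fin n × Fin n => p.1 < p.2),
          Tvec n p.1 p.2 y j * g p.2 p.1 := by
    rw [← Finset.sum_subtype_eq_sum_filter (fun p : Fin n × Fin n => Tvec n p.1 p.2 y j * g p.2 p.1)
      (p := fun p : Fin n × Fin n => p.1 < p.2), Finset.subtype_univ]
  rw [hsub, Finset.sum_filter, Fintype.sum_prod_type]
  have key : ∀ a b : Fin n, (if a < b then Tvec n a b y j * g b a else 0)
      = (if a = j then (if j < b then y b * g b j else 0) else 0)
        + (if b = j then (if a < j then y a * g a j else 0) else 0) := by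
    intro a b
    unfold Tvec
    by_cases hab : a < b
    · by_cases h1 : j = a
      · subst h1
        have hjb : ¬ b = j := fun h => absurd (h ▸ hab) (lt_irrefl _)
        simp [hab, hjb]
      · by_cases h2 : j = b
        · subst h2
          have haj : ¬ a = j := fun h => absurd (h ▸ hab) (lt_irrefl _)
          have hgaj := hg a j (fun h => absurd (h ▸ hab) (lt_irrefl _))
          simp [h1, haj, hab]
          rw [show g j a = -(g a j) by linarith]
          ring
        · simp [h1, h2, Ne.symm h1, Ne.symm h2, hab]
    · by_cases ha : a = j
      · subst ha
        simp [hab, lt_irrefl]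
      · by_cases hb : b = j
        · subst hb
          simp [hab, ha]
        · simp [hab, ha, hb]
  calc ∑ a : Fin n, ∑ b : Fin n, (if a < b then Tvec n a b y j * g b a else 0)
      = ∑ a : Fin n, ∑ b : Fin n,
          ((if a = j then (if j < b then y b * g b j else 0) else 0)
            + (if b = j then (if a < j then y a * g a j else 0) else 0)) := by
        exact Finset.sum_congr rfl fun a _ => Finset.sum_congr rfl fun b _ => key a b
    _ = (∑ b : Fin n, (if j < b then y b * g b j else 0))
          + ∑ a : Fin n, (if a < j then y a * g a j else 0) := by
        simp only [Finset.sum_add_distrib]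
        congr 1
        · simp [Finset.sum_ite_irrel, Finset.sum_ite_eq']
        · simp [Finset.sum_ite_eq']
    _ = ∑ l, (if l = j then 0 else y l * g l j) := by
        rw [← Finset.sum_add_distrib]
        refine Finset.sum_congr rfl fun l _ => ?_
        rcases lt_trichotomy l j with h | h | h
        · simp [h, not_lt.mpr h.le, h.ne]
        · subst h; simp
        · simp [h, not_lt.mpr h.le, h.ne']

end Aux
/-- Let `Φ(x) = x₁ - ∑ᵢ yᵢ²` and let `θ` be an affine symmetric-matrix-valued function,
positive semi-definite on `{Φ ≥ 0}`, with `∇Φ(x) θ(x) = 0` on the parabola `{Φ = 0}`.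
Then the upper-left `q×q` block of `θ` is `c ζ` for some `c ≥ 0` and the upper-right
block is `ζ A₁ + η A₂` for some constant matrices `A₁, A₂`.
Coordinates: `x = (x₁, y, z)` indexed by `(Unit ⊕ Fin n) ⊕ Fin m`, `q = n + 1 > 1`. -/
theorem stmt11 (n m : ℕ) (hn : 1 ≤ n)
    (θ : (((Unit ⊕ Fin n) ⊕ Fin m) → ℝ) →
      Matrix ((Unit ⊕ Fin n) ⊕ Fin m) ((Unit ⊕ Fin n) ⊕ Fin m) ℝ)
    (A0 : Matrix ((Unit ⊕ Fin n) ⊕ Fin m) ((Unit ⊕ Fin n) ⊕ Fin m) ℝ)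
    (A : ((Unit ⊕ Fin n) ⊕ Fin m) →
      Matrix ((Unit ⊕ Fin n) ⊕ Fin m) ((Unit ⊕ Fin n) ⊕ Fin m) ℝ)
    (haff : ∀ x, θ x = A0 + ∑ i, x i • A i)
    (hsymm : ∀ x, (θ x).IsSymm)
    (hpsd : ∀ x : ((Unit ⊕ Fin n) ⊕ Fin m) → ℝ,
      ∑ j, (x (Sum.inl (Sum.inr j))) ^ 2 ≤ x (Sum.inl (Sum.inl ())) → (θ x).PosSemidef)
    (hgrad : ∀ x : ((Unit ⊕ Fin n) ⊕ Fin m) → ℝ,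
      x (Sum.inl (Sum.inl ())) = ∑ j, (x (Sum.inl (Sum.inr j))) ^ 2 →
      Matrix.vecMul
        (Sum.elim (Sum.elim (fun _ => (1 : ℝ)) fun j => -2 * x (Sum.inl (Sum.inr j)))
          fun _ => 0) (θ x) = 0) :
    ∃ (c : ℝ) (_ : 0 ≤ c) (A1 : Matrix (Unit ⊕ Fin n) (Fin m) ℝ)
      (A2 : Matrix {ij : Fin n × Fin n // ij.1 < ij.2} (Fin m) ℝ),
      ∀ x : ((Unit ⊕ Fin n) ⊕ Fin m) → ℝ,
        (θ x).toBlocks₁₁ =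
          c • zetaMat n (x (Sum.inl (Sum.inl ()))) (fun j => x (Sum.inl (Sum.inr j))) ∧
        (θ x).toBlocks₁₂ =
          zetaMat n (x (Sum.inl (Sum.inl ()))) (fun j => x (Sum.inl (Sum.inr j))) * A1 +
            etaMat n (fun j => x (Sum.inl (Sum.inr j))) * A2 := by
  classical
  -- master identity obtained from the gradient condition on the parabola
  have master : ∀ (y0 : Fin n → ℝ) (z0 : Fin m → ℝ) (b : (Unit ⊕ Fin n) ⊕ Fin m),
      A0 (iT n m) b + ((∑ j, (y0 j)^2) * A (iT n m) (iT n m) b +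
        ((∑ j, y0 j * A (iY n m j) (iT n m) b) + ∑ k, z0 k * A (iZ n m k) (iT n m) b))
      = 2 * ∑ j, y0 j * (A0 (iY n m j) b + ((∑ l, (y0 l)^2) * A (iT n m) (iY n m j) b +
        ((∑ l, y0 l * A (iY n m l) (iY n m j) b) + ∑ k, z0 k * A (iZ n m k) (iY n m j) b))) := by
    intro y0 z0 b
    have hx : (pt (∑ j, (y0 j)^2) y0 z0) (Sum.inl (Sum.inl ()))
        = ∑ j, ((pt (∑ j, (y0 j)^2) y0 z0) (Sum.inl (Sum.inr j)))^2 := rfl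
    have h := row_eq (θ (pt (∑ j, (y0 j)^2) y0 z0)) _ (hgrad _ hx) b
    simp only [entry_eq θ A0 A haff, pt, Sum.elim_inl, Sum.elim_inr, iT, iY, iZ] at h
    exact h
  -- basic coefficient facts
  have E1 : ∀ b, A0 (iT n m) b = 0 := by
    intro b
    have h := master (fun _ => 0) (fun _ => 0) b
    simpa using h
  have E2 : ∀ k b, A (iZ n m k) (iT n m) b = 0 := by
    intro k b
    have h := master (fun _ => 0) (fun k' => if k' = k then 1 else 0) b
    simp [sumS, E1, ite_mul, Finset.sum_ite_eq'] at h
    exact h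
  -- single-direction identity
  have Msing : ∀ (j : Fin n) (s : ℝ) (b : (Unit ⊕ Fin n) ⊕ Fin m),
      s^2 * A (iT n m) (iT n m) b + s * A (iY n m j) (iT n m) b
        = 2 * (s * (A0 (iY n m j) b + s^2 * A (iT n m) (iY n m j) b
          + s * A (iY n m j) (iY n m j) b)) := by
    intro j s b
    have h := master (fun l => if l = j then s else 0) (fun _ => 0) b
    simp only [sumS, sumSsq, E1, Finset.sum_const_zero, zero_mul, mul_zero,
      add_zero, zero_add] at h
    linarith
  have E3 : ∀ j b, A (iY n m j) (iT n m) b = 2 * A0 (iY n m j) b := by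
    intro j b
    have h1 := Msing j 1 b
    have h2 := Msing j (-1) b
    have h3 := Msing j 2 b
    nlinarith [h1, h2, h3]
  have E4 : ∀ j b, A (iT n m) (iT n m) b = 2 * A (iY n m j) (iY n m j) b := by
    intro j b
    have h1 := Msing j 1 b
    have h2 := Msing j (-1) b
    have h3 := Msing j 2 b
    nlinarith [h1, h2, h3]
  have E5 : ∀ j b, A (iT n m) (iY n m j) b = 0 := by
    intro j b
    have h1 := Msing j 1 b
    have h2 := Msing j (-1) b
    have h3 := Msing j 2 b
    nlinarith [h1, h2, h3]
  -- double-direction: antisymmetry relation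
  have Mdou : ∀ (i j : Fin n), i ≠ j → ∀ (s : ℝ) (b : (Unit ⊕ Fin n) ⊕ Fin m),
      2*s^2 * A (iT n m) (iT n m) b + s * A (iY n m j) (iT n m) b
        + s * A (iY n m i) (iT n m) b
        = 2 * (s * (A0 (iY n m j) b + 2*s^2 * A (iT n m) (iY n m j) b
            + s * A (iY n m j) (iY n m j) b + s * A (iY n m i) (iY n m j) b)
          + s * (A0 (iY n m i) b + 2*s^2 * A (iT n m) (iY n m i) b
            + s * A (iY n m j) (iY n m i) b + s * A (iY n m i) (iY n m i) b)) := by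
    intro i j hij s b
    have h := master (fun l => (if l = j then s else 0) + (if l = i then s else 0))
      (fun _ => 0) b
    simp only [sumD i j hij, sumDsq i j hij, E1, zero_mul, Finset.sum_const_zero, mul_zero,
      add_zero, zero_add, add_mul, Finset.sum_add_distrib, sumS] at h
    linarith
  have E6 : ∀ (i j : Fin n), i ≠ j → ∀ b,
      A (iY n m i) (iY n m j) b + A (iY n m j) (iY n m i) b = 0 := by
    intro i j hij b
    have h1 := Mdou i j hij 1 b
    have h2 := Mdou i j hij (-1) b
    have h3 := E4 i b
    have h4 := E4 j b
    nlinarith [h1, h2, h3, h4]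
  -- unified antisymmetry
  have E6u : ∀ (i j : Fin n) (b : (Unit ⊕ Fin n) ⊕ Fin m),
      A (iY n m i) (iY n m j) b + A (iY n m j) (iY n m i) b
        = (if i = j then A (iT n m) (iT n m) b else 0) := by
    intro i j b
    by_cases hij : i = j
    · subst hij; simp [← E4 i b]; linarith [E4 i b]
    · simp [hij, E6 i j hij b]
  -- z-coefficients of y-rows vanish
  have E7 : ∀ (j : Fin n) (k : Fin m) (b : (Unit ⊕ Fin n) ⊕ Fin m),
      A (iZ n m k) (iY n m j) b = 0 := by
    intro j k b
    have h1 := master (fun l => if l = j then 1 else 0) (fun k' => if k' = k then 1 else 0) b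
    have h2 := master (fun l => if l = j then -1 else 0) (fun k' => if k' = k then 1 else 0) b
    simp only [sumS, sumSsq, E1, E2, zero_mul, mul_zero, Finset.sum_const_zero,
      add_zero, zero_add] at h1 h2
    nlinarith [h1, h2, E3 j b, E5 j b]
  -- symmetry of the coefficient matrices
  have hA0s : ∀ a b, A0 a b = A0 b a := by
    intro a b
    have h0 : θ (fun _ => 0) = A0 := by
      rw [haff]; simp
    have hs := hsymm (fun _ => 0)
    rw [h0] at hs
    exact hs.apply b a
  have hAs : ∀ i a b, A i a b = A i b a := by
    intro i a b
    have hx : θ (fun i' => if i' = i then 1 else 0) = A0 + A i := by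
      rw [haff]
      congr 1
      have hterm : ∀ i', (if i' = i then (1:ℝ) else 0) • A i' = (if i' = i then A i' else 0) := by
        intro i'; split <;> simp
      rw [Finset.sum_congr rfl (fun i' _ => hterm i')]
      simp [Finset.sum_ite_eq']
    have hs := hsymm (fun i' => if i' = i then 1 else 0)
    rw [hx] at hs
    have h := hs.apply b a
    simp only [Matrix.add_apply] at h
    have := hA0s a b
    linarith
  -- A t t (Y j) vanishes
  have hATTY : ∀ j, A (iT n m) (iT n m) (iY n m j) = 0 := by
    intro j
    rw [hAs (iT n m) (iT n m) (iY n m j)]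
    exact E5 j (iT n m)
  -- the constant c (times 4)
  have F1 : ∀ j l, A0 (iY n m j) (iY n m l)
      = (if j = l then A (iT n m) (iT n m) (iT n m) / 4 else 0) := by
    intro j l
    have h := E6u j l (iT n m)
    have h1 : A (iY n m j) (iY n m l) (iT n m) = 2 * A0 (iY n m j) (iY n m l) := by
      rw [hAs (iY n m j) (iY n m l) (iT n m)]
      exact E3 j (iY n m l)
    have h2 : A (iY n m l) (iY n m j) (iT n m) = 2 * A0 (iY n m j) (iY n m l) := by
      rw [hAs (iY n m l) (iY n m j) (iT n m), E3 l (iY n m j)]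
      rw [hA0s (iY n m l) (iY n m j)]
    by_cases hjl : j = l
    · subst hjl
      simp only [eq_self_iff_true, if_true] at h ⊢
      linarith
    · simp only [if_neg hjl] at h ⊢
      linarith
  -- all y-coefficients of the y-y block vanish
  have F2 : ∀ i j l, A (iY n m l) (iY n m i) (iY n m j) = 0 := by
    have h2 : ∀ a b c : Fin n, A (iY n m a) (iY n m b) (iY n m c)
        + A (iY n m b) (iY n m a) (iY n m c) = 0 := by
      intro a b c
      have h := E6u a b (iY n m c)
      by_cases hab : a = b
      · subst hab
        simp only [eq_self_iff_true, if_true] at h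
        rw [hATTY c] at h
        linarith
      · simp only [if_neg hab] at h
        exact h
    have h1 : ∀ a b c : Fin n, A (iY n m a) (iY n m b) (iY n m c)
        = A (iY n m a) (iY n m c) (iY n m b) := fun a b c => hAs _ _ _
    intro i j l
    linarith [h1 l i j, h1 i l j, h1 j i l, h1 i j l, h1 j l i, h1 l j i,
      h2 l i j, h2 i j l, h2 j l i, h2 i l j, h2 j i l, h2 l j i]
  -- nonnegativity of c
  have hcnn : 0 ≤ A (iT n m) (iT n m) (iT n m) := by
    have hx : ∑ j, ((pt (n:=n) (m:=m) 1 (fun _ => 0) (fun _ => 0) : ((Unit ⊕ Fin n) ⊕ Fin m) → ℝ)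
        (Sum.inl (Sum.inr j)))^2 ≤ (pt (n:=n) (m:=m) 1 (fun _ => 0) (fun _ => 0)) (Sum.inl (Sum.inl ())) := by
      simp [pt]
    have h := (hpsd _ hx).dotProduct_mulVec_nonneg (Pi.single (iT n m) 1)
    have hval : (star (Pi.single (iT n m) (1:ℝ)) ⬝ᵥ
        (θ (pt (n:=n) (m:=m) 1 (fun _ => 0) (fun _ => 0)) *ᵥ Pi.single (iT n m) 1))
        = θ (pt (n:=n) (m:=m) 1 (fun _ => 0) (fun _ => 0)) (iT n m) (iT n m) := by
      simp [dotProduct, Matrix.mulVec, Pi.single_apply, mul_ite, ite_mul,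
        Finset.sum_ite_eq, Finset.sum_ite_eq']
    rw [hval] at h
    rw [entry_eq θ A0 A haff] at h
    simp [pt, E1] at h
    exact h
  -- entry formulas for θ at an arbitrary point
  have hTT : ∀ x : ((Unit ⊕ Fin n) ⊕ Fin m) → ℝ,
      θ x (iT n m) (iT n m) = x (iT n m) * A (iT n m) (iT n m) (iT n m) := by
    intro x
    rw [entry_eq θ A0 A haff]
    have h3 : ∀ j : Fin n, A (iY n m j) (iT n m) (iT n m) = 0 := by
      intro j
      rw [E3 j (iT n m), hA0s (iY n m j) (iT n m), E1]
      ring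
    simp [E1, E2, h3]
  have hTY : ∀ (x : ((Unit ⊕ Fin n) ⊕ Fin m) → ℝ) (l : Fin n),
      θ x (iT n m) (iY n m l)
        = A (iT n m) (iT n m) (iT n m) / 4 * (2 * x (iY n m l)) := by
    intro x l
    rw [entry_eq θ A0 A haff]
    have h3 : ∀ j : Fin n, A (iY n m j) (iT n m) (iY n m l)
        = if j = l then 2 * (A (iT n m) (iT n m) (iT n m) / 4) else 0 := by
      intro j
      rw [E3 j (iY n m l), F1 j l]
      split <;> ring
    rw [Finset.sum_congr rfl (fun j _ => by rw [h3 j])]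
    simp [E1, E2, hATTY, mul_ite, Finset.sum_ite_eq']
    ring
  have hYY : ∀ (x : ((Unit ⊕ Fin n) ⊕ Fin m) → ℝ) (j l : Fin n),
      θ x (iY n m j) (iY n m l)
        = if j = l then A (iT n m) (iT n m) (iT n m) / 4 else 0 := by
    intro x j l
    rw [entry_eq θ A0 A haff]
    simp [F1 j l, E5, E7, F2]
  have hTZ : ∀ (x : ((Unit ⊕ Fin n) ⊕ Fin m) → ℝ) (k : Fin m),
      θ x (iT n m) (iZ n m k)
        = x (iT n m) * A (iT n m) (iT n m) (iZ n m k)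
          + ∑ j, x (iY n m j) * (2 * A0 (iY n m j) (iZ n m k)) := by
    intro x k
    rw [entry_eq θ A0 A haff]
    rw [Finset.sum_congr rfl (fun j (_ : j ∈ Finset.univ) => by rw [E3 j (iZ n m k)])]
    simp [E1, E2]
  have hYZ : ∀ (x : ((Unit ⊕ Fin n) ⊕ Fin m) → ℝ) (j : Fin n) (k : Fin m),
      θ x (iY n m j) (iZ n m k)
        = A0 (iY n m j) (iZ n m k)
          + ∑ l, x (iY n m l) * A (iY n m l) (iY n m j) (iZ n m k) := by
    intro x j k
    rw [entry_eq θ A0 A haff]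
    simp [E5, E7]
  -- final construction
  refine ⟨A (iT n m) (iT n m) (iT n m) / 4, by linarith,
    Matrix.of (fun r k => Sum.elim (fun _ => A (iT n m) (iT n m) (iZ n m k) / 4)
      (fun j => A0 (iY n m j) (iZ n m k)) r),
    Matrix.of (fun p k => A (iY n m p.1.2) (iY n m p.1.1) (iZ n m k)), ?_⟩
  intro x
  constructor
  · ext a b
    cases a with
    | inl u =>
      cases b with
      | inl u' =>
        simp only [Matrix.toBlocks₁₁, Matrix.of_apply, Matrix.smul_apply, smul_eq_mul, zetaMat]
        rw [hTT x]
        ring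
      | inr l =>
        simp only [Matrix.toBlocks₁₁, Matrix.of_apply, Matrix.smul_apply, smul_eq_mul, zetaMat]
        rw [hTY x l]
    | inr j =>
      cases b with
      | inl u' =>
        simp only [Matrix.toBlocks₁₁, Matrix.of_apply, Matrix.smul_apply, smul_eq_mul, zetaMat]
        rw [(hsymm x).apply (Sum.inl (Sum.inl u')) (Sum.inl (Sum.inr j))]
        rw [show (Sum.inl (Sum.inl u') : (Unit ⊕ Fin n) ⊕ Fin m) = iT n m from rfl]
        rw [hTY x j]
      | inr l =>
        simp only [Matrix.toBlocks₁₁, Matrix.of_apply, Matrix.smul_apply, smul_eq_mul, zetaMat]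
        rw [hYY x j l]
        split <;> simp
  · ext a k
    cases a with
    | inl u =>
      simp only [Matrix.toBlocks₁₂, Matrix.of_apply, Matrix.add_apply, Matrix.mul_apply,
        etaMat, zetaMat, Sum.elim_inl, zero_mul, Finset.sum_const_zero, add_zero,
        Fintype.sum_sum_type]
      rw [hTZ x k]
      simp only [Matrix.of_apply, Sum.elim_inl, Sum.elim_inr, Fintype.sum_unique]
      rw [Finset.sum_congr rfl (fun j (_ : j ∈ Finset.univ) => show
          x (iY n m j) * (2 * A0 (iY n m j) (iZ n m k))
            = 2 * x (Sum.inl (Sum.inr j)) * A0 (Sum.inl (Sum.inr j)) (Sum.inr k) by ring)]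
      ring
    | inr j =>
      simp only [Matrix.toBlocks₁₂, Matrix.of_apply, Matrix.add_apply, Matrix.mul_apply,
        etaMat, zetaMat, Sum.elim_inr, Fintype.sum_sum_type]
      rw [hYZ x j k]
      simp only [Matrix.of_apply, Sum.elim_inl, Sum.elim_inr, Fintype.sum_unique,
        ite_mul, one_mul, zero_mul, Finset.sum_ite_eq, Finset.mem_univ, if_true]
      have heta : ∑ p : {ij : Fin n × Fin n // ij.1 < ij.2},
          Tvec n p.1.1 p.1.2 (fun l => x (Sum.inl (Sum.inr l))) j
            * A (iY n m p.1.2) (iY n m p.1.1) (iZ n m k)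
          = ∑ l, (if l = j then 0
              else x (Sum.inl (Sum.inr l)) * A (iY n m l) (iY n m j) (iZ n m k)) :=
        eta_sum (fun l => x (Sum.inl (Sum.inr l)))
          (fun a b => A (iY n m a) (iY n m b) (iZ n m k))
          (fun a b hab => by
            have h := E6u a b (iZ n m k)
            simp only [if_neg hab] at h
            exact h) j
      have hsplit : ∑ l, x (iY n m l) * A (iY n m l) (iY n m j) (iZ n m k)
          = x (iY n m j) * A (iY n m j) (iY n m j) (iZ n m k)
            + ∑ l, (if l = j then 0
                else x (Sum.inl (Sum.inr l)) * A (iY n m l) (iY n m j) (iZ n m k)) := by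
        rw [Finset.sum_congr rfl (fun l (_ : l ∈ Finset.univ) => show
            x (iY n m l) * A (iY n m l) (iY n m j) (iZ n m k)
              = (if l = j then x (iY n m j) * A (iY n m j) (iY n m j) (iZ n m k) else 0)
                + (if l = j then 0
                    else x (Sum.inl (Sum.inr l)) * A (iY n m l) (iY n m j) (iZ n m k)) by
          by_cases h : l = j
          · subst h; simp
          · simp [h])]
        rw [Finset.sum_add_distrib, Finset.sum_ite_eq']
        simp
      rw [hsplit, ← heta, E4 j (iZ n m k)]
      ring
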